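/- Let p_s, p_d ∈ (0, 1] with p_d − p_s + p_s·p_d ≥ 0, let λ ∈ [0, 1], set α* = (p_d − p_s + p_s·p_d)/(2·p_s·p_d) and γ = (1 + p_s)·p_d·(1 − λ)/((1 + p_s)·p_d − λ·(p_s·p_d + p_d − p_s)), and define F₂(x) = 1 − p_s·p_d/((1 + p_s)·p_d − 2·x·p_s·p_d). Then F₂(λ·α*) = γ·F₂(0) + (1 − γ)·F₂(α*), where F₂(0) = 1 − p_s/(1 + p_s) and F₂(α*) = 1 − p_d. -/

import Mathlib

/-- Convex-combination identity for the cross-queue factor `F₂`: with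
`F₂(x) = 1 − p_s p_d / ((1 + p_s) p_d − 2 x p_s p_d)`,
`α* = (p_d − p_s + p_s p_d)/(2 p_s p_d)` and
`γ = (1 + p_s) p_d (1 − λ)/((1 + p_s) p_d − λ(p_s p_d + p_d − p_s))`, one has
`F₂(λ α*) = γ F₂(0) + (1 − γ) F₂(α*)`, where `F₂(0) = 1 − p_s/(1 + p_s)` and
`F₂(α*) = 1 − p_d`. -/
theorem convex_combination_F2
    (ps pd : ℝ) (hps0 : 0 < ps) (hps1 : ps ≤ 1) (hpd0 : 0 < pd) (hpd1 : pd ≤ 1)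
    (hnum : 0 ≤ pd - ps + ps * pd)
    (lam : ℝ) (hlam0 : 0 ≤ lam) (hlam1 : lam ≤ 1)
    (αstar : ℝ) (hαstar : αstar = (pd - ps + ps * pd) / (2 * ps * pd))
    (γ : ℝ)
    (hγ : γ = (1 + ps) * pd * (1 - lam)
        / ((1 + ps) * pd - lam * (ps * pd + pd - ps)))
    (F2 : ℝ → ℝ)
    (hF2 : ∀ x, F2 x = 1 - ps * pd / ((1 + ps) * pd - 2 * x * ps * pd)) :
    F2 (lam * αstar) = γ * F2 0 + (1 - γ) * F2 αstar
      ∧ F2 0 = 1 - ps / (1 + ps)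
      ∧ F2 αstar = 1 - pd := by
  have hps' : ps ≠ 0 := hps0.ne'
  have hpd' : pd ≠ 0 := hpd0.ne'
  have h1 : (1:ℝ) + ps ≠ 0 := by positivity
  have hα2 : 2 * αstar * ps * pd = pd - ps + ps * pd := by
    rw [hαstar]; field_simp
  have hα : 2 * (lam * αstar) * ps * pd = lam * (pd - ps + ps * pd) := by
    rw [hαstar]; field_simp
  have hD : (0:ℝ) < (1 + ps) * pd - lam * (ps * pd + pd - ps) := by nlinarith
  have hD' : (1 + ps) * pd - lam * (ps * pd + pd - ps) ≠ 0 := hD.ne'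
  have hF0 : F2 0 = 1 - ps / (1 + ps) := by
    rw [hF2]
    rw [show (1 + ps) * pd - 2 * 0 * ps * pd = (1 + ps) * pd by ring]
    rw [show ps * pd / ((1 + ps) * pd) = ps / (1 + ps) by
      rw [div_eq_div_iff (by positivity) h1]; ring]
  have hFα : F2 αstar = 1 - pd := by
    rw [hF2, show (1 + ps) * pd - 2 * αstar * ps * pd = ps by rw [hα2]; ring]
    rw [show ps * pd / ps = pd by field_simp]
  refine ⟨?_, hF0, hFα⟩
  rw [hF0, hFα, hF2, hα, hγ]
  have hDne : (1 + ps) * pd - lam * (pd - ps + ps * pd) ≠ 0 := by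
    intro h; apply hD'; linarith [h]
  rw [show (1 + ps) * pd - lam * (ps * pd + pd - ps) = (1 + ps) * pd - lam * (pd - ps + ps * pd) by ring]
  generalize hDg : (1 + ps) * pd - lam * (pd - ps + ps * pd) = D at hDne ⊢
  field_simp
  rw [← hDg]
  ring
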